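/- Let S : ℝ₊^N → ℝ₊^N be continuous, monotone, and positively homogeneous (S(tx) = tS(x) for all t > 0), let ε > 0, set T_ε(x) = S(x) + ε·1, and let ‖·‖ be a monotone norm on ℝ^N. Suppose that for each p > 0 there is a point x_p ∈ ℝ₊₊^N with T_ε(x_p) = (‖T_ε(x_p)‖/p)·x_p and ‖x_p‖ = p. Then lim_{p→∞} ‖T_ε(x_p)‖/p = ρ(S), the spectral radius of S. -/

import Mathlib

open Filter Topology

private lemma ratio_max_aux {N : ℕ} (hN : 1 ≤ N) (u v : Fin N → ℝ) (hv : ∀ i, 0 < v i) :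
    ∃ t : ℝ, (∀ i, u i ≤ t * v i) ∧ ∃ i, u i = t * v i := by
  have hne : (Finset.univ : Finset (Fin N)).Nonempty := ⟨⟨0, hN⟩, Finset.mem_univ _⟩
  refine ⟨Finset.univ.sup' hne fun i => u i / v i, ?_, ?_⟩
  · intro i
    have h1 : u i / v i ≤ Finset.univ.sup' hne fun i => u i / v i :=
      Finset.le_sup' (fun i => u i / v i) (Finset.mem_univ i)
    have h2 := mul_le_mul_of_nonneg_right h1 (hv i).le
    rwa [div_mul_cancel₀ _ (hv i).ne'] at h2
  · obtain ⟨i, _, hi⟩ := Finset.exists_mem_eq_sup' hne fun i => u i / v i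
    exact ⟨i, by rw [hi, div_mul_cancel₀ _ (hv i).ne']⟩

/-- For `T_ε(x) = S(x) + ε·1` and, for each `p > 0`, a normalized conditional
eigenvector `X p ∈ ℝ₊₊^N` with `T_ε(X p) = (‖T_ε(X p)‖/p)·(X p)` and `‖X p‖ = p`,
we have `lim_{p→∞} ‖T_ε(X p)‖/p = ρ(S)`, the spectral radius of `S`. -/
theorem stmt_4 (N : ℕ) (hN : 1 ≤ N)
    (S : (Fin N → ℝ) → (Fin N → ℝ))
    (hS_nonneg : ∀ x : Fin N → ℝ, (∀ i, 0 ≤ x i) → ∀ i, 0 ≤ S x i)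
    (hS_cont : ContinuousOn S {x : Fin N → ℝ | ∀ i, 0 ≤ x i})
    (hS_mono : ∀ x y : Fin N → ℝ, (∀ i, 0 ≤ x i) → (∀ i, 0 ≤ y i) → x ≤ y → S x ≤ S y)
    (hS_hom : ∀ t : ℝ, 0 < t → ∀ x : Fin N → ℝ, (∀ i, 0 ≤ x i) → S (t • x) = t • S x)
    (ε : ℝ) (hε : 0 < ε)
    (Tε : (Fin N → ℝ) → (Fin N → ℝ))
    (hTε : ∀ x, Tε x = S x + ε • (1 : Fin N → ℝ))
    (nrm : (Fin N → ℝ) → ℝ)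
    (hnrm_zero : ∀ x, nrm x = 0 ↔ x = 0)
    (hnrm_smul : ∀ (a : ℝ) (x : Fin N → ℝ), nrm (a • x) = |a| * nrm x)
    (hnrm_add : ∀ x y : Fin N → ℝ, nrm (x + y) ≤ nrm x + nrm y)
    (hnrm_mono : ∀ x y : Fin N → ℝ, (0 : Fin N → ℝ) ≤ x → x ≤ y → nrm x ≤ nrm y)
    (X : ℝ → (Fin N → ℝ))
    (hX : ∀ p : ℝ, 0 < p →
      (∀ i, 0 < X p i) ∧ Tε (X p) = (nrm (Tε (X p)) / p) • X p ∧ nrm (X p) = p) :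
    Tendsto (fun p : ℝ => nrm (Tε (X p)) / p) atTop
      (𝓝 (sSup {lam : ℝ | 0 ≤ lam ∧
        ∃ u : Fin N → ℝ, (∀ i, 0 ≤ u i) ∧ u ≠ 0 ∧ S u = lam • u})) := by
  set E : Set ℝ := {lam : ℝ | 0 ≤ lam ∧
      ∃ u : Fin N → ℝ, (∀ i, 0 ≤ u i) ∧ u ≠ 0 ∧ S u = lam • u} with hE
  set lf : ℝ → ℝ := fun p : ℝ => nrm (Tε (X p)) / p with hlf
  have hne : (Finset.univ : Finset (Fin N)).Nonempty := ⟨⟨0, hN⟩, Finset.mem_univ _⟩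
  -- basic norm facts
  have hnrm0 : nrm 0 = 0 := (hnrm_zero 0).mpr rfl
  have hnrm_neg : ∀ x, nrm (-x) = nrm x := by
    intro x
    have h := hnrm_smul (-1) x
    simpa using h
  have hnrm_nonneg : ∀ x, 0 ≤ nrm x := by
    intro x
    have h := hnrm_add x (-x)
    rw [add_neg_cancel, hnrm0, hnrm_neg] at h
    linarith
  -- eigen equation
  have heig : ∀ p : ℝ, 0 < p → S (X p) + ε • (1 : Fin N → ℝ) = lf p • X p := by
    intro p hp
    simp only [hlf]
    rw [← hTε (X p)]
    exact (hX p hp).2.1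
  have heigc : ∀ p : ℝ, 0 < p → ∀ i, S (X p) i + ε = lf p * X p i := by
    intro p hp i
    have h := congrFun (heig p hp) i
    simpa [smul_eq_mul] using h
  have hlf_nonneg : ∀ p : ℝ, 0 < p → 0 ≤ lf p := by
    intro p hp
    simp only [hlf]
    exact div_nonneg (hnrm_nonneg _) hp.le
  -- comparison with eigenpairs
  have hcomp : ∀ p : ℝ, 0 < p → ∀ lam : ℝ, ∀ u : Fin N → ℝ,
      (∀ i, 0 ≤ u i) → u ≠ 0 → S u = lam • u → lam ≤ lf p := by
    intro p hp lam u hu hune hSu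
    have hXp := (hX p hp).1
    obtain ⟨t, htub, i0, hti0⟩ := ratio_max_aux hN u (X p) hXp
    have ht : 0 < t := by
      by_contra hc
      push_neg at hc
      apply hune
      funext i
      have h1 := htub i
      have h2 : t * X p i ≤ 0 := mul_nonpos_iff.mpr (Or.inr ⟨hc, (hXp i).le⟩)
      have h3 := hu i
      simp only [Pi.zero_apply]
      linarith
    have hmono : S u ≤ S (t • X p) := by
      refine hS_mono u (t • X p) hu ?_ ?_
      · intro i
        have := mul_nonneg ht.le (hXp i).le
        simpa [smul_eq_mul] using this
      · intro i
        simpa [smul_eq_mul] using htub i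
    have hhom := hS_hom t ht (X p) (fun i => (hXp i).le)
    have h1 : lam * u i0 ≤ t * S (X p) i0 := by
      have h := hmono i0
      rw [hSu, hhom] at h
      simpa [smul_eq_mul] using h
    have h3 := heigc p hp i0
    have hXi0 := hXp i0
    rw [hti0] at h1
    nlinarith [mul_pos ht hXi0, hε, ht]
  -- antitonicity of lf on (0,∞)
  have hanti : ∀ p q : ℝ, 0 < p → p ≤ q → lf q ≤ lf p := by
    intro p q hp hpq
    have hq : 0 < q := lt_of_lt_of_le hp hpq
    have hXp := (hX p hp).1
    have hXq := (hX q hq).1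
    obtain ⟨t, htub, i0, hti0⟩ := ratio_max_aux hN (X q) (X p) hXp
    have ht : 0 < t := by
      have h1 := htub ⟨0, hN⟩
      nlinarith [hXq ⟨0, hN⟩, hXp ⟨0, hN⟩]
    have hle : X q ≤ t • X p := by
      intro i
      simpa [smul_eq_mul] using htub i
    have hn1 : nrm (X q) ≤ nrm (t • X p) := by
      refine hnrm_mono _ _ ?_ hle
      intro i
      simpa using (hXq i).le
    rw [hnrm_smul, abs_of_pos ht, (hX q hq).2.2, (hX p hp).2.2] at hn1
    have ht1 : 1 ≤ t := by nlinarith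
    have hmono : S (X q) ≤ S (t • X p) := by
      refine hS_mono (X q) (t • X p) (fun i => (hXq i).le) ?_ hle
      intro i
      have := mul_nonneg ht.le (hXp i).le
      simpa [smul_eq_mul] using this
    have hhom := hS_hom t ht (X p) (fun i => (hXp i).le)
    have h1 : S (X q) i0 ≤ t * S (X p) i0 := by
      have h := hmono i0
      rw [hhom] at h
      simpa [smul_eq_mul] using h
    have hq0 := heigc q hq i0
    have hp0 := heigc p hp i0
    rw [hti0] at hq0
    nlinarith [mul_pos ht (hXp i0), hXp i0, hε]
  -- subadditivity over finite sums
  have hnrm_sum : ∀ (f : Fin N → (Fin N → ℝ)) (s : Finset (Fin N)),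
      nrm (∑ i ∈ s, f i) ≤ ∑ i ∈ s, nrm (f i) := by
    intro f s
    induction s using Finset.induction_on with
    | empty => simp [hnrm0]
    | insert _ _ ha ih =>
      rw [Finset.sum_insert ha, Finset.sum_insert ha]
      exact (hnrm_add _ _).trans (by linarith)
  -- basis vectors
  set e : Fin N → (Fin N → ℝ) := fun i j => if i = j then 1 else 0 with he
  have he_pos : ∀ i, 0 < nrm (e i) := by
    intro i
    rcases lt_or_eq_of_le (hnrm_nonneg (e i)) with h | h
    · exact h
    · exfalso
      have h2 := (hnrm_zero (e i)).mp h.symm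
      have h3 := congrFun h2 i
      simp [he] at h3
  set C : ℝ := ∑ i, nrm (e i) with hC
  have hC0 : 0 ≤ C := Finset.sum_nonneg fun i _ => hnrm_nonneg _
  have hbound : ∀ x : Fin N → ℝ, nrm x ≤ C * ‖x‖ := by
    intro x
    have hx := pi_eq_sum_univ x
    have he_def : ∀ i : Fin N, (fun j => if i = j then (1:ℝ) else 0) = e i := fun i => rfl
    calc nrm x = nrm (∑ i, x i • e i) := by
            conv_lhs => rw [hx]
      _ ≤ ∑ i, nrm (x i • e i) := hnrm_sum _ _
      _ = ∑ i, |x i| * nrm (e i) := by simp [hnrm_smul]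
      _ ≤ ∑ i, ‖x‖ * nrm (e i) := by
            refine Finset.sum_le_sum fun i _ => ?_
            exact mul_le_mul_of_nonneg_right
              (by simpa [Real.norm_eq_abs] using norm_le_pi_norm x i) (hnrm_nonneg _)
      _ = C * ‖x‖ := by rw [← Finset.mul_sum, ← hC, mul_comm]
  have hnrm_cont : Continuous nrm := by
    refine (LipschitzWith.of_dist_le_mul (K := ⟨C, hC0⟩) ?_).continuous
    intro x y
    have h1 : nrm x ≤ nrm (x - y) + nrm y := by
      have h := hnrm_add (x - y) y
      rwa [sub_add_cancel] at h
    have h2 : nrm y ≤ nrm (x - y) + nrm x := by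
      have h := hnrm_add (y - x) x
      rw [sub_add_cancel, show y - x = -(x - y) by abel, hnrm_neg] at h
      exact h
    rw [Real.dist_eq, dist_eq_norm]
    have h3 : |nrm x - nrm y| ≤ nrm (x - y) := abs_sub_le_iff.mpr ⟨by linarith, by linarith⟩
    exact h3.trans (hbound _)
  -- compactness of the normalized nonnegative sphere
  set K : Set (Fin N → ℝ) := {u | (∀ i, 0 ≤ u i) ∧ nrm u = 1} with hK
  have hKclosed : IsClosed K := by
    have h1 : IsClosed {u : Fin N → ℝ | ∀ i, 0 ≤ u i} := by
      have he' : {u : Fin N → ℝ | ∀ i, 0 ≤ u i} = ⋂ i, {u | 0 ≤ u i} := by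
        ext u; simp [Set.mem_iInter]
      rw [he']
      exact isClosed_iInter fun i => isClosed_le continuous_const (continuous_apply i)
    have h2 : IsClosed {u : Fin N → ℝ | nrm u = 1} := isClosed_eq hnrm_cont continuous_const
    exact h1.inter h2
  have hKcomp : IsCompact K := by
    set B : ℝ := (Finset.univ.sup' hne fun i => (nrm (e i))⁻¹) ⊔ 0 with hB
    have hB0 : (0:ℝ) ≤ B := le_sup_right
    have hsub : K ⊆ Metric.closedBall 0 B := by
      intro u hu
      rw [Metric.mem_closedBall, dist_zero_right]
      refine (pi_norm_le_iff_of_nonneg hB0).mpr fun i => ?_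
      rw [Real.norm_eq_abs, abs_of_nonneg (hu.1 i)]
      have hle : u i • e i ≤ u := by
        intro j
        by_cases h : i = j
        · subst h; simp [he]
        · simp [he, h, hu.1 j]
      have h0 : (0 : Fin N → ℝ) ≤ u i • e i := by
        intro j
        have hj : (0:ℝ) ≤ e i j := by by_cases h : i = j <;> simp [he, h]
        have := mul_nonneg (hu.1 i) hj
        simpa [smul_eq_mul] using this
      have key : u i * nrm (e i) ≤ 1 := by
        have h1 := hnrm_mono _ _ h0 hle
        rwa [hnrm_smul, abs_of_nonneg (hu.1 i), hu.2] at h1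
      have h2 : u i ≤ (nrm (e i))⁻¹ := by
        rw [← one_div]
        exact (le_div_iff₀ (he_pos i)).mpr key
      rw [hB]
      exact h2.trans (le_trans (Finset.le_sup' (fun i => (nrm (e i))⁻¹) (Finset.mem_univ i)) le_sup_left)
    exact (isCompact_closedBall 0 B).of_isClosed_subset hKclosed hsub
  -- monotone limit
  set L : ℝ := ⨅ p : ℝ, lf (max p 1) with hL
  have hg_anti : Antitone (fun p : ℝ => lf (max p 1)) := by
    intro p q hpq
    exact hanti (max p 1) (max q 1) (lt_of_lt_of_le one_pos (le_max_right p 1))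
      (max_le_max hpq le_rfl)
  have hg_bdd : BddBelow (Set.range fun p : ℝ => lf (max p 1)) := by
    refine ⟨0, ?_⟩
    rintro y ⟨p, rfl⟩
    exact hlf_nonneg _ (lt_of_lt_of_le one_pos (le_max_right p 1))
  have hgt : Tendsto (fun p : ℝ => lf (max p 1)) atTop (𝓝 L) :=
    tendsto_atTop_ciInf hg_anti hg_bdd
  have hlf_tend : Tendsto lf atTop (𝓝 L) := by
    refine Tendsto.congr' ?_ hgt
    filter_upwards [eventually_ge_atTop (1:ℝ)] with p hp
    rw [max_eq_left hp]
  have hL0 : 0 ≤ L :=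
    ge_of_tendsto' hgt fun p => hlf_nonneg _ (lt_of_lt_of_le one_pos (le_max_right p 1))
  -- subsequence of normalized eigenvectors
  have hymem : ∀ n : ℕ, (((n:ℝ)+1)⁻¹ • X ((n:ℝ)+1)) ∈ K := by
    intro n
    have hp : (0:ℝ) < (n:ℝ)+1 := by positivity
    constructor
    · intro i
      have := mul_nonneg (inv_nonneg.mpr hp.le) ((hX _ hp).1 i).le
      simpa [smul_eq_mul] using this
    · rw [hnrm_smul, (hX _ hp).2.2, abs_of_pos (inv_pos.mpr hp)]
      field_simp
  obtain ⟨x0, hx0K, φ, hφ, hφt⟩ := hKcomp.tendsto_subseq hymem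
  set pn : ℕ → ℝ := fun n => (φ n : ℝ) + 1 with hpn
  have hpn_pos : ∀ n, 0 < pn n := fun n => by positivity
  have hpn_top : Tendsto pn atTop atTop := by
    have h1 : Tendsto (fun n : ℕ => (φ n : ℝ)) atTop atTop :=
      tendsto_natCast_atTop_atTop.comp hφ.tendsto_atTop
    exact tendsto_atTop_add_const_right _ 1 h1
  have hlim1 : Tendsto (fun n => lf (pn n)) atTop (𝓝 L) := hlf_tend.comp hpn_top
  have hφt' : Tendsto (fun n => (pn n)⁻¹ • X (pn n)) atTop (𝓝 x0) := by
    simpa [Function.comp_def, hpn] using hφt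
  have hyeq : ∀ p : ℝ, 0 < p →
      S (p⁻¹ • X p) = lf p • (p⁻¹ • X p) - (ε * p⁻¹) • (1 : Fin N → ℝ) := by
    intro p hp
    rw [hS_hom p⁻¹ (inv_pos.mpr hp) (X p) (fun i => ((hX p hp).1 i).le)]
    have h2 : S (X p) = lf p • X p - ε • (1 : Fin N → ℝ) := eq_sub_of_add_eq (heig p hp)
    rw [h2]
    funext i
    simp [smul_eq_mul]
    ring
  have ht1 : Tendsto (fun n => S ((pn n)⁻¹ • X (pn n))) atTop (𝓝 (S x0)) := by
    have hmem : ∀ n, ((pn n)⁻¹ • X (pn n)) ∈ {x : Fin N → ℝ | ∀ i, 0 ≤ x i} :=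
      fun n => (hymem (φ n)).1
    have hx0mem : x0 ∈ {x : Fin N → ℝ | ∀ i, 0 ≤ x i} := hx0K.1
    exact (hS_cont x0 hx0mem).tendsto.comp
      (tendsto_nhdsWithin_iff.mpr ⟨hφt', Eventually.of_forall hmem⟩)
  have htz : Tendsto (fun n => ε * (pn n)⁻¹) atTop (𝓝 0) := by
    have := (tendsto_inv_atTop_zero.comp hpn_top).const_mul ε
    simpa using this
  have ht2 : Tendsto (fun n => lf (pn n) • ((pn n)⁻¹ • X (pn n))
      - (ε * (pn n)⁻¹) • (1 : Fin N → ℝ)) atTop (𝓝 (L • x0)) := by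
    have h := (hlim1.smul hφt').sub (htz.smul_const (1 : Fin N → ℝ))
    simpa using h
  have hSx0 : S x0 = L • x0 := by
    refine tendsto_nhds_unique ht1 ?_
    refine ht2.congr fun n => ?_
    exact (hyeq (pn n) (hpn_pos n)).symm
  have hx0ne : x0 ≠ 0 := by
    intro h
    have h2 := hx0K.2
    rw [h, hnrm0] at h2
    norm_num at h2
  have hLmem : L ∈ E := ⟨hL0, x0, hx0K.1, hx0ne, hSx0⟩
  have hEbdd : BddAbove E := by
    refine ⟨lf 1, ?_⟩
    rintro lam ⟨h0, u, hu, hune, hSu⟩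
    exact hcomp 1 one_pos lam u hu hune hSu
  have hsup : sSup E = L := by
    refine le_antisymm (csSup_le ⟨L, hLmem⟩ ?_) (le_csSup hEbdd hLmem)
    rintro lam ⟨h0, u, hu, hune, hSu⟩
    refine ge_of_tendsto hlf_tend ?_
    filter_upwards [eventually_gt_atTop (0:ℝ)] with p hp
    exact hcomp p hp lam u hu hune hSu
  rw [hsup]
  exact hlf_tend
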